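/- Let d ≥ 1 and let A be a d × d complex matrix. Then limsup_{m→∞} |tr(A^m)|^{1/m} equals the spectral radius of A, i.e., the maximum of the absolute values of the (complex) eigenvalues of A. -/

import Mathlib

open Filter

section Aux

open Finset Module Module.End LinearMap

local notation "conj" => starRingEnd ℂ

-- trace of restriction to generalized eigenspace
lemma trace_restrict_maxGen {V : Type*} [AddCommGroup V] [Module ℂ V] [FiniteDimensional ℂ V]
    (f : Module.End ℂ V) (μ : ℂ) (m : ℕ)
    (h : Set.MapsTo (f ^ m) (f.maxGenEigenspace μ) (f.maxGenEigenspace μ)) :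
    LinearMap.trace ℂ _ ((f ^ m).restrict h) =
      μ ^ m * (Module.finrank ℂ (f.maxGenEigenspace μ) : ℂ) := by
  have hmapsto : Set.MapsTo f (f.maxGenEigenspace μ) (f.maxGenEigenspace μ) :=
    f.mapsTo_maxGenEigenspace_of_comm (Commute.refl f) μ
  set p := f.maxGenEigenspace μ
  set g : Module.End ℂ p := f.restrict hmapsto with hg
  have hpow : (f ^ m).restrict h = g ^ m := by
    rw [hg, Module.End.pow_restrict m hmapsto h]
  set n : Module.End ℂ p := g - algebraMap ℂ (Module.End ℂ p) μ with hn
  have hnil : IsNilpotent n := by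
    have h2 : Set.MapsTo (f - algebraMap ℂ (Module.End ℂ V) μ) p p :=
      f.mapsTo_maxGenEigenspace_of_comm (Algebra.mul_sub_algebraMap_commutes f μ) μ
    have : n = (f - algebraMap ℂ (Module.End ℂ V) μ).restrict h2 := by
      ext x
      simp [hn, hg, LinearMap.restrict_apply, LinearMap.restrict_coe_apply, LinearMap.sub_apply, Module.algebraMap_end_apply]
      rfl
    rw [this]
    exact f.isNilpotent_restrict_maxGenEigenspace_sub_algebraMap μ
  have hgeq : g = algebraMap ℂ (Module.End ℂ p) μ + n := by rw [hn]; abel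
  have hcomm : Commute (algebraMap ℂ (Module.End ℂ p) μ) n := (Algebra.commutes μ n)
  rw [hpow, hgeq, hcomm.add_pow]
  rw [map_sum]
  rw [Finset.sum_eq_single m]
  · simp only [Nat.sub_self, pow_zero, mul_one, Nat.choose_self, Nat.cast_one]
    rw [← map_pow, Algebra.algebraMap_eq_smul_one, map_smul, LinearMap.trace_one]
    simp [smul_eq_mul]
  · intro k hk hkm
    have hk1 : 1 ≤ m - k := by
      simp only [Finset.mem_range] at hk; omega
    have hnilk : IsNilpotent (n ^ (m - k)) := hnil.pow_of_pos (by omega)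
    have htr : LinearMap.trace ℂ p (n ^ (m - k)) = 0 := by
      have := LinearMap.isNilpotent_trace_of_isNilpotent hnilk
      exact this.eq_zero
    rw [← map_pow, ← Algebra.smul_def]
    have : (μ ^ k • n ^ (m - k)) * ((m.choose k : ℕ) : Module.End ℂ p)
        = (m.choose k : ℕ) • (μ ^ k • n ^ (m - k)) := by
      rw [nsmul_eq_mul]
      exact ((Nat.cast_commute (m.choose k) _).eq).symm
    rw [this, map_nsmul, map_smul, htr]
    simp
  · intro hm; simp at hm

lemma aux_trace (d : ℕ) (A : Matrix (Fin d) (Fin d) ℂ) :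
    ∃ (S : Finset ℂ) (c : ℂ → ℕ),
      (∀ x ∈ S, 0 < c x) ∧ (↑S = spectrum ℂ A) ∧
      ∀ m : ℕ, Matrix.trace (A ^ m) = ∑ x ∈ S, (c x : ℂ) * x ^ m := by
  classical
  set b := Pi.basisFun ℂ (Fin d)
  set f : Module.End ℂ (Fin d → ℂ) := Matrix.toLinAlgEquiv b A with hf
  have hind := f.independent_maxGenEigenspace
  have hN : {μ | f.maxGenEigenspace μ ≠ ⊥}.Finite :=
    WellFoundedGT.finite_ne_bot_of_iSupIndep hind
  refine ⟨hN.toFinset, fun μ => Module.finrank ℂ (f.maxGenEigenspace μ), ?_, ?_, ?_⟩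
  · intro x hx
    rw [Set.Finite.mem_toFinset] at hx
    have : Module.finrank ℂ (f.maxGenEigenspace x) ≠ 0 := by
      rw [ne_eq, Submodule.finrank_eq_zero]
      exact hx
    exact Nat.pos_of_ne_zero this
  · ext x
    rw [Set.Finite.coe_toFinset]
    have h1 : x ∈ spectrum ℂ A ↔ x ∈ spectrum ℂ f := by
      rw [hf, AlgEquiv.spectrum_eq]
    rw [Set.mem_setOf_eq, h1, ← Module.End.hasUnifEigenvalue_iff_mem_spectrum,
      ← Module.End.hasUnifEigenvalue_iff_hasUnifEigenvalue_one (k := ⊤) (by norm_num)]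
    exact Iff.rfl
  · intro m
    have hInt : DirectSum.IsInternal f.maxGenEigenspace := by
      rw [DirectSum.isInternal_submodule_iff_iSupIndep_and_iSup_eq_top]
      exact ⟨hind, f.iSup_maxGenEigenspace_eq_top⟩
    have hmaps : ∀ μ : ℂ, Set.MapsTo (f ^ m) (f.maxGenEigenspace μ) (f.maxGenEigenspace μ) :=
      fun μ => f.mapsTo_maxGenEigenspace_of_comm (Commute.pow_right (Commute.refl f) m) μ
    have htr : Matrix.trace (A ^ m) = LinearMap.trace ℂ _ (f ^ m) := by
      rw [hf, ← map_pow, LinearMap.trace_eq_matrix_trace ℂ b]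
      congr 1
      have h2 : Matrix.toLinAlgEquiv b (A ^ m) = Matrix.toLin b b (A ^ m) := rfl
      rw [h2, LinearMap.toMatrix_toLin]
    rw [htr, LinearMap.trace_eq_sum_trace_restrict' hInt hN hmaps]
    refine Finset.sum_congr rfl fun μ hμ => ?_
    rw [trace_restrict_maxGen f μ m (hmaps μ)]
    ring

lemma aux_freq (S : Finset ℂ) (c : ℂ → ℕ) (hc : ∀ x ∈ S, 0 < c x)
    (μ : ℂ) (hμ : μ ∈ S) (hmax : ∀ x ∈ S, ‖x‖ ≤ ‖μ‖)
    (hρ : 0 < ‖μ‖)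
    (hbound : ∀ m, ‖∑ x ∈ S, (c x : ℂ) * x ^ m‖
      ≤ (∑ x ∈ S, (c x : ℝ)) * ‖μ‖ ^ m) :
    ∃ᶠ m in atTop, (1/2 : ℝ) * ‖μ‖ ^ m
      ≤ ‖∑ x ∈ S, (c x : ℂ) * x ^ m‖ := by
  classical
  set ρ : ℝ := ‖μ‖ with hρdef
  set s : ℕ → ℂ := fun m => ∑ x ∈ S, (c x : ℂ) * x ^ m with hs
  set C : ℝ := ∑ x ∈ S, (c x : ℝ) with hC
  have hC1 : (1 : ℝ) ≤ C := by
    have := Finset.single_le_sum (f := fun x => (c x : ℝ))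
      (fun x _ => by positivity) hμ
    have h1 : (1 : ℝ) ≤ (c μ : ℝ) := by exact_mod_cast hc μ hμ
    rw [hC]; linarith
  have hρm : ∀ m : ℕ, (0:ℝ) < ρ ^ m := fun m => pow_pos hρ m
  by_contra hcon
  rw [Filter.not_frequently] at hcon
  obtain ⟨N0, hN0⟩ := Filter.eventually_atTop.mp (hcon.mono fun m h => not_le.mp h)
  -- the normalized squares
  set a : ℕ → ℝ := fun m => Complex.normSq (s m) / ρ ^ (2 * m) with ha
  have hpm2 : ∀ m : ℕ, ρ ^ (2*m) = (ρ ^ m)^2 := fun m => by rw [mul_comm 2 m, pow_mul]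
  have ha_le : ∀ m, a m ≤ C ^ 2 := by
    intro m
    have h1 : Complex.normSq (s m) ≤ (C * ρ ^ m) ^ 2 := by
      rw [Complex.normSq_eq_norm_sq]
      have h2 := hbound m
      have h0 : (0:ℝ) ≤ ‖s m‖ := norm_nonneg _
      nlinarith
    rw [ha]
    rw [div_le_iff₀ (by positivity), hpm2]
    nlinarith [hρm m]
  have ha_small : ∀ m, N0 ≤ m → a m ≤ 1/4 := by
    intro m hm
    have h2 := hN0 m hm
    have h0 : (0:ℝ) ≤ ‖s m‖ := norm_nonneg _
    have h1 : Complex.normSq (s m) ≤ (1/4) * ρ ^ (2 * m) := by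
      rw [Complex.normSq_eq_norm_sq, hpm2]
      nlinarith [hρm m]
    rw [ha, div_le_iff₀ (by positivity)]
    linarith
  -- pair setup
  set z : ℂ × ℂ → ℂ := fun p => p.1 * conj p.2 / (ρ : ℂ) ^ 2 with hz
  set cc : ℂ × ℂ → ℂ := fun p => (c p.1 : ℂ) * (c p.2 : ℂ) with hcc
  have hρC : ((ρ : ℂ)) ^ 2 ≠ 0 := by
    refine pow_ne_zero 2 ?_
    exact_mod_cast hρ.ne'
  -- identity for a m
  have key : ∀ m, a m = (∑ p ∈ S ×ˢ S, cc p * (z p) ^ m).re := by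
    intro m
    have e1 : (∑ p ∈ S ×ˢ S, cc p * (z p) ^ m)
        = s m * conj (s m) / ((ρ:ℂ)) ^ (2 * m) := by
      rw [hs]
      simp only [map_sum, map_mul, map_pow, map_natCast]
      rw [Finset.sum_mul_sum, Finset.sum_div, Finset.sum_product]
      refine Finset.sum_congr rfl fun x hx => ?_
      rw [Finset.sum_div]
      refine Finset.sum_congr rfl fun y hy => ?_
      rw [hcc, hz]
      simp only
      rw [div_pow, ← pow_mul, mul_pow]
      field_simp
    rw [e1, Complex.mul_conj]
    have e3 : ((ρ:ℂ)) ^ (2*m) = ((ρ ^ (2*m) : ℝ) : ℂ) := by push_cast; ring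
    rw [e3, ← Complex.ofReal_div, Complex.ofReal_re]
  -- the limit value
  set L : ℝ := (∑ p ∈ S ×ˢ S, cc p * (if z p = 1 then 1 else 0)).re with hL
  have hz_le : ∀ p ∈ S ×ˢ S, ‖z p‖ ≤ 1 := by
    intro p hp
    rw [Finset.mem_product] at hp
    rw [hz]
    simp only
    rw [norm_div, norm_mul, norm_pow]
    simp only [Complex.norm_conj, Complex.norm_real, Real.norm_eq_abs]
    rw [abs_of_pos hρ, div_le_one (by positivity)]
    calc ‖p.1‖ * ‖p.2‖ ≤ ρ * ρ :=
      mul_le_mul (hmax _ hp.1) (hmax _ hp.2) (norm_nonneg _) (le_of_lt hρ)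
    _ = ρ ^ 2 := by ring
  have hgeom : ∀ p ∈ S ×ˢ S, Tendsto
      (fun N : ℕ => ((N : ℂ))⁻¹ * ∑ m ∈ Finset.range N, (z p) ^ m)
      atTop (nhds (if z p = 1 then 1 else 0)) := by
    intro p hp
    by_cases h1 : z p = 1
    · simp only [h1, if_pos, one_pow, Finset.sum_const, Finset.card_range, nsmul_eq_mul, mul_one]
      have hev : ∀ᶠ N : ℕ in atTop, ((N:ℂ))⁻¹ * (N : ℂ) = 1 := by
        filter_upwards [eventually_ge_atTop 1] with N hN
        rw [inv_mul_cancel₀]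
        exact_mod_cast Nat.one_le_iff_ne_zero.mp hN
      exact Tendsto.congr' (hev.mono fun N h => h.symm) tendsto_const_nhds
    · rw [if_neg h1]
      have hb2 : Tendsto (fun N : ℕ => (N:ℝ)⁻¹ * (2 / ‖z p - 1‖)) atTop (nhds 0) := by
        have h2 : Tendsto (fun N : ℕ => ((N:ℝ))⁻¹) atTop (nhds 0) :=
          tendsto_inv_atTop_zero.comp tendsto_natCast_atTop_atTop
        simpa using h2.mul_const (2 / ‖z p - 1‖)
      refine squeeze_zero_norm ?_ hb2
      intro N
      rw [geom_sum_eq h1, norm_mul, norm_inv, Complex.norm_natCast, norm_div]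
      gcongr
      calc ‖(z p) ^ N - 1‖ ≤ ‖(z p)^N‖ + ‖(1:ℂ)‖ := norm_sub_le _ _
      _ ≤ 1 + 1 := by
          rw [norm_pow, norm_one]
          gcongr
          exact pow_le_one₀ (norm_nonneg _) (hz_le p hp)
      _ = 2 := by norm_num
  -- averages of a tend to L
  have e4 : ∀ N : ℕ, ((N:ℝ))⁻¹ * ∑ m ∈ Finset.range N, a m
      = (∑ p ∈ S ×ˢ S, cc p * (((N:ℂ))⁻¹ * ∑ m ∈ Finset.range N, (z p) ^ m)).re := by
    intro N
    have e5 : ∑ m ∈ Finset.range N, a m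
        = (∑ p ∈ S ×ˢ S, cc p * ∑ m ∈ Finset.range N, (z p) ^ m).re := by
      simp_rw [key]
      rw [← Complex.re_sum]
      congr 1
      rw [Finset.sum_comm]
      exact Finset.sum_congr rfl fun p _ => (Finset.mul_sum _ _ _).symm
    rw [e5]
    have e6 : (∑ p ∈ S ×ˢ S, cc p * (((N:ℂ))⁻¹ * ∑ m ∈ Finset.range N, (z p) ^ m))
        = ((N:ℂ))⁻¹ * ∑ p ∈ S ×ˢ S, cc p * ∑ m ∈ Finset.range N, (z p) ^ m := by
      rw [Finset.mul_sum]
      exact Finset.sum_congr rfl fun p _ => by ring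
    rw [e6]
    have e7 : ((N:ℂ))⁻¹ = (((N:ℝ)⁻¹ : ℝ) : ℂ) := by push_cast; ring
    rw [e7, Complex.re_ofReal_mul]
  have havg : Tendsto (fun N : ℕ => ((N:ℝ))⁻¹ * ∑ m ∈ Finset.range N, a m)
      atTop (nhds L) := by
    have h1 : Tendsto (fun N : ℕ => ∑ p ∈ S ×ˢ S, cc p
        * (((N : ℂ))⁻¹ * ∑ m ∈ Finset.range N, (z p) ^ m)) atTop
        (nhds (∑ p ∈ S ×ˢ S, cc p * (if z p = 1 then 1 else 0))) :=
      tendsto_finset_sum _ fun p hp => Tendsto.const_mul _ (hgeom p hp)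
    have h2 := (Complex.continuous_re.tendsto _).comp h1
    exact h2.congr fun N => (e4 N).symm
  -- L is at least 1
  have hL1 : (1:ℝ) ≤ L := by
    rw [hL, Complex.re_sum]
    have hterm : ∀ p ∈ S ×ˢ S, (0:ℝ) ≤ (cc p * (if z p = 1 then 1 else 0)).re := by
      intro p hp
      split_ifs with h
      · rw [mul_one]
        have hre : (cc p).re = (c p.1 : ℝ) * (c p.2 : ℝ) := by
          simp [hcc, Complex.mul_re]
        rw [hre]
        positivity
      · simp
    have hmem : (μ, μ) ∈ S ×ˢ S := Finset.mem_product.mpr ⟨hμ, hμ⟩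
    have hzμ : z (μ, μ) = 1 := by
      rw [hz]
      simp only
      rw [Complex.mul_conj, div_eq_one_iff_eq hρC, Complex.normSq_eq_norm_sq]
      rw [hρdef]
      push_cast
      ring
    have h3 := Finset.single_le_sum hterm hmem
    have h4 : (cc (μ, μ) * (if z (μ, μ) = 1 then 1 else 0)).re = (c μ : ℝ) * (c μ : ℝ) := by
      rw [if_pos hzμ, mul_one]
      simp [hcc, Complex.mul_re]
    have h5 : (1:ℝ) ≤ (c μ : ℝ) * (c μ : ℝ) := by
      have h1 : (1 : ℝ) ≤ (c μ : ℝ) := by exact_mod_cast hc μ hμ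
      nlinarith
    rw [h4] at h3
    linarith
  -- comparison sequence
  set b : ℕ → ℝ := fun m => if m < N0 then C^2 else 1/4 with hb
  have hab : ∀ m, a m ≤ b m := by
    intro m
    by_cases h : m < N0
    · simpa [hb, h] using ha_le m
    · simpa [hb, h] using ha_small m (Nat.not_lt.mp h)
  have hbt : Tendsto b atTop (nhds (1/4 : ℝ)) := by
    have hconst : Tendsto (fun _ : ℕ => (1/4 : ℝ)) atTop (nhds (1/4 : ℝ)) := tendsto_const_nhds
    apply hconst.congr'
    filter_upwards [eventually_ge_atTop N0] with m hm
    simp [hb, Nat.not_lt.mpr hm]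
  have hbavg := hbt.cesaro
  have hle : ∀ N : ℕ, ((N:ℝ))⁻¹ * ∑ m ∈ Finset.range N, a m
      ≤ ((N:ℝ))⁻¹ * ∑ m ∈ Finset.range N, b m := by
    intro N
    have : ∑ m ∈ Finset.range N, a m ≤ ∑ m ∈ Finset.range N, b m :=
      Finset.sum_le_sum fun m _ => hab m
    have hN : (0:ℝ) ≤ ((N:ℝ))⁻¹ := by positivity
    exact mul_le_mul_of_nonneg_left this hN
  have hL4 : L ≤ 1/4 := le_of_tendsto_of_tendsto' havg hbavg hle
  linarith

lemma aux_limsup (S : Finset ℂ) (c : ℂ → ℕ) (hc : ∀ x ∈ S, 0 < c x)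
    (μ : ℂ) (hμ : μ ∈ S) (hmax : ∀ x ∈ S, ‖x‖ ≤ ‖μ‖)
    (hfreq : 0 < ‖μ‖ →
      (∀ m, ‖∑ x ∈ S, (c x : ℂ) * x ^ m‖
        ≤ (∑ x ∈ S, (c x : ℝ)) * ‖μ‖ ^ m) →
      ∃ᶠ m in atTop, (1/2 : ℝ) * ‖μ‖ ^ m
        ≤ ‖∑ x ∈ S, (c x : ℂ) * x ^ m‖) :
    Filter.limsup (fun m : ℕ =>
        ‖∑ x ∈ S, (c x : ℂ) * x ^ m‖ ^ ((m : ℝ)⁻¹)) Filter.atTop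
      = ‖μ‖ := by
  classical
  set ρ : ℝ := ‖μ‖ with hρdef
  set s : ℕ → ℂ := fun m => ∑ x ∈ S, (c x : ℂ) * x ^ m with hs
  set u : ℕ → ℝ := fun m => ‖s m‖ ^ ((m : ℝ)⁻¹) with hu
  rcases eq_or_ne ρ 0 with hρ | hρne
  · -- all eigenvalues are zero
    have hev : ∀ᶠ m in atTop, u m = 0 := by
      filter_upwards [eventually_ge_atTop 1] with m hm
      have hs0 : s m = 0 := by
        rw [hs]
        refine Finset.sum_eq_zero fun x hx => ?_
        have hx0 : x = 0 := by
          have h1 := hmax x hx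
          rw [hρ] at h1
          have h2 := norm_nonneg x
          have : ‖x‖ = 0 := le_antisymm h1 h2
          exact norm_eq_zero.mp this
        rw [hx0, zero_pow (by omega), mul_zero]
      rw [hu]
      simp only
      rw [hs0, norm_zero, Real.zero_rpow]
      rw [ne_eq, inv_eq_zero, Nat.cast_eq_zero]
      omega
    rw [hρ, Filter.limsup_congr hev, Filter.limsup_const]
  · have hρpos : 0 < ρ := lt_of_le_of_ne (norm_nonneg μ) (Ne.symm hρne)
    set C : ℝ := ∑ x ∈ S, (c x : ℝ) with hC
    have hC1 : (1 : ℝ) ≤ C := by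
      have := Finset.single_le_sum (f := fun x => (c x : ℝ))
        (fun x _ => by positivity) hμ
      have h1 : (1 : ℝ) ≤ (c μ : ℝ) := by exact_mod_cast hc μ hμ
      rw [hC]; linarith
    have hbound : ∀ m, ‖s m‖ ≤ C * ρ ^ m := by
      intro m
      calc ‖s m‖ ≤ ∑ x ∈ S, ‖(c x : ℂ) * x ^ m‖ :=
            norm_sum_le _ _
      _ ≤ ∑ x ∈ S, (c x : ℝ) * ρ ^ m := by
          refine Finset.sum_le_sum fun x hx => ?_
          rw [norm_mul, norm_pow]
          simp only [Complex.norm_natCast]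
          gcongr
          · exact hmax x hx
      _ = C * ρ ^ m := by rw [hC, ← Finset.sum_mul]
    have hinv0 : Tendsto (fun m : ℕ => ((m:ℝ))⁻¹) atTop (nhds 0) :=
      tendsto_inv_atTop_zero.comp tendsto_natCast_atTop_atTop
    have hpowρ : ∀ m : ℕ, m ≠ 0 → ((ρ ^ m : ℝ)) ^ ((m:ℝ)⁻¹) = ρ := by
      intro m hm
      rw [← Real.rpow_natCast ρ m, ← Real.rpow_mul hρpos.le,
        mul_inv_cancel₀ (by exact_mod_cast hm), Real.rpow_one]
    have hu_nonneg : ∀ m, 0 ≤ u m := fun m => Real.rpow_nonneg (norm_nonneg _) _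
    -- upper bound
    set v : ℕ → ℝ := fun m => C ^ ((m:ℝ)⁻¹) * ρ with hv
    have hvt : Tendsto v atTop (nhds ρ) := by
      have h2 : Tendsto (fun m : ℕ => C ^ ((m:ℝ)⁻¹)) atTop (nhds (C ^ (0:ℝ))) :=
        Filter.Tendsto.rpow tendsto_const_nhds hinv0 (Or.inl (by linarith))
      rw [Real.rpow_zero] at h2
      simpa using h2.mul_const ρ
    have hle : ∀ᶠ m in atTop, u m ≤ v m := by
      filter_upwards [eventually_ge_atTop 1] with m hm
      have h1 : u m ≤ (C * ρ ^ m) ^ ((m:ℝ)⁻¹) := by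
        rw [hu]
        exact Real.rpow_le_rpow (norm_nonneg _) (hbound m) (by positivity)
      have h2 : (C * ρ ^ m) ^ ((m:ℝ)⁻¹) = v m := by
        rw [Real.mul_rpow (by linarith) (by positivity), hpowρ m (by omega)]
      rw [h2] at h1
      exact h1
    have hup : Filter.limsup u atTop ≤ ρ := by
      have h3 : Filter.limsup u atTop ≤ Filter.limsup v atTop := by
        refine Filter.limsup_le_limsup hle ?_ ?_
        · exact isCoboundedUnder_le_of_eventually_le atTop
            (x := 0) (Filter.Eventually.of_forall hu_nonneg)
        · exact hvt.isBoundedUnder_le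
      rwa [hvt.limsup_eq] at h3
    -- boundedness of u
    have hbdd : Filter.IsBoundedUnder (· ≤ ·) atTop u := by
      refine isBoundedUnder_of_eventually_le (a := C * ρ) ?_
      filter_upwards [hle, eventually_ge_atTop 1] with m hm hm1
      refine hm.trans ?_
      rw [hv]
      simp only
      gcongr
      calc C ^ ((m:ℝ)⁻¹) ≤ C ^ (1:ℝ) := by
            refine Real.rpow_le_rpow_of_exponent_le hC1 ?_
            rw [inv_le_one_iff₀]
            right
            exact_mod_cast hm1
      _ = C := Real.rpow_one C
    -- lower bound
    have hlow : ρ ≤ Filter.limsup u atTop := by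
      by_contra hlt
      push_neg at hlt
      set r : ℝ := (Filter.limsup u atTop + ρ) / 2 with hr
      have hr1 : Filter.limsup u atTop < r := by rw [hr]; linarith
      have hr2 : r < ρ := by rw [hr]; linarith
      have hfr := hfreq hρpos hbound
      set w : ℕ → ℝ := fun m => ((1:ℝ)/2) ^ ((m:ℝ)⁻¹) * ρ with hw
      have hwt : Tendsto w atTop (nhds ρ) := by
        have h2 : Tendsto (fun m : ℕ => ((1:ℝ)/2) ^ ((m:ℝ)⁻¹)) atTop
            (nhds (((1:ℝ)/2) ^ (0:ℝ))) :=
          Filter.Tendsto.rpow tendsto_const_nhds hinv0 (Or.inl (by norm_num))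
        rw [Real.rpow_zero] at h2
        have h3 := h2.mul_const ρ
        rw [one_mul] at h3
        exact h3
      have hev2 : ∀ᶠ m in atTop, r ≤ w m := hwt.eventually (eventually_ge_nhds hr2)
      have hfreq2 : ∃ᶠ m in atTop, r ≤ u m := by
        refine (hfr.and_eventually (hev2.and (eventually_ge_atTop 1))).mono ?_
        rintro m ⟨h1, h2, h3⟩
        have h4 : ((1/2:ℝ) * ρ ^ m) ^ ((m:ℝ)⁻¹) ≤ u m := by
          rw [hu]
          exact Real.rpow_le_rpow (by positivity) h1 (by positivity)
        have h5 : ((1/2:ℝ) * ρ ^ m) ^ ((m:ℝ)⁻¹) = w m := by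
          rw [Real.mul_rpow (by norm_num) (by positivity), hpowρ m (by omega)]
        rw [h5] at h4
        linarith
      have := Filter.le_limsup_of_frequently_le hfreq2 hbdd
      linarith
    exact le_antisymm hup hlow

end Aux

/-- For a `d × d` complex matrix `A` (`d ≥ 1`),
`limsup_{m→∞} |tr(A^m)|^{1/m}` equals the spectral radius of `A`, i.e. the maximum of the
moduli of its (complex) eigenvalues. -/
theorem stmt4 (d : ℕ) (hd : 1 ≤ d) (A : Matrix (Fin d) (Fin d) ℂ) :
    ∃ μ ∈ spectrum ℂ A,
      (∀ lam ∈ spectrum ℂ A, ‖lam‖ ≤ ‖μ‖) ∧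
      Filter.limsup
        (fun m : ℕ => ‖Matrix.trace (A ^ m)‖ ^ ((m : ℝ)⁻¹)) Filter.atTop
        = ‖μ‖ := by
  obtain ⟨S, c, hc, hSspec, htr⟩ := aux_trace d A
  have hS : S.Nonempty := by
    rw [Finset.nonempty_iff_ne_empty]
    intro hemp
    have h0 := htr 0
    rw [hemp] at h0
    simp only [pow_zero, Matrix.trace_one, Finset.sum_empty] at h0
    rw [Fintype.card_fin] at h0
    have : d = 0 := by exact_mod_cast h0
    omega
  obtain ⟨μ, hμS, hmax⟩ := S.exists_max_image (fun x : ℂ => ‖x‖) hS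
  refine ⟨μ, ?_, ?_, ?_⟩
  · rw [← hSspec]
    exact_mod_cast hμS
  · intro lam hlam
    rw [← hSspec] at hlam
    exact hmax lam (by exact_mod_cast hlam)
  · have hfun : (fun m : ℕ => ‖Matrix.trace (A ^ m)‖ ^ ((m : ℝ)⁻¹))
        = fun m : ℕ => ‖∑ x ∈ S, (c x : ℂ) * x ^ m‖ ^ ((m : ℝ)⁻¹) :=
      funext fun m => by rw [htr m]
    rw [hfun]
    exact aux_limsup S c hc μ hμS hmax (aux_freq S c hc μ hμS hmax)
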